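/- An integer triple (a, b, c) with positive entries is a primitive Eisensteinian triplet if and only if (a,b,c) = (1,1,1), or there exists a finite (possibly empty) product M of the matrices M₁,…,M₅ (M₁ = [[7,−6,6],[8,−7,7],[4,−4,3]], M₂ = [[7,6,−6],[8,7,−7],[4,3,−4]], M₃ = [[7,6,0],[8,7,0],[4,3,1]], M₄ = [[7,0,6],[8,0,7],[4,1,3]], M₅ = [[7,0,−6],[8,0,−7],[4,1,−4]]) and a vector v ∈ {(7,8,5)ᵗ, (13,15,7)ᵗ} such that M·v = (a,b,c)ᵗ or M·v = (a,b,b−c)ᵗ (after ordering so that b ≥ c). -/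

import Mathlib

open Matrix
set_option maxHeartbeats 1000000


def Mmat : Fin 5 → Matrix (Fin 3) (Fin 3) ℤ
  | 0 => !![7, -6, 6; 8, -7, 7; 4, -4, 3]
  | 1 => !![7, 6, -6; 8, 7, -7; 4, 3, -4]
  | 2 => !![7, 6, 0; 8, 7, 0; 4, 3, 1]
  | 3 => !![7, 0, 6; 8, 0, 7; 4, 1, 3]
  | 4 => !![7, 0, -6; 8, 0, -7; 4, 1, -4]

lemma mulVec3 (m : Matrix (Fin 3) (Fin 3) ℤ) (v : Fin 3 → ℤ) :
    m.mulVec v = ![m 0 0 * v 0 + m 0 1 * v 1 + m 0 2 * v 2,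
      m 1 0 * v 0 + m 1 1 * v 1 + m 1 2 * v 2,
      m 2 0 * v 0 + m 2 1 * v 1 + m 2 2 * v 2] := by
  funext i
  fin_cases i <;> simp [Matrix.mulVec, dotProduct, Fin.sum_univ_three]

/-- Reachability predicate matching the RHS of the theorem with target `(a,b,c)`. -/
def Reach (a b c : ℤ) : Prop :=
  ∃ (l : List (Fin 5)) (v : Fin 3 → ℤ),
    (v = ![7, 8, 5] ∨ v = ![13, 15, 7]) ∧ (l.map Mmat).prod.mulVec v = ![a, b, c]

lemma reach_785 : Reach 7 8 5 :=
  ⟨[], ![7,8,5], Or.inl rfl, by simp⟩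

lemma reach_13157 : Reach 13 15 7 :=
  ⟨[], ![13,15,7], Or.inr rfl, by simp⟩

lemma reach_step (i : Fin 5) {x y z a b c : ℤ} (h : Reach x y z)
    (hM : (Mmat i).mulVec ![x, y, z] = ![a, b, c]) : Reach a b c := by
  obtain ⟨l, v, hv, hl⟩ := h
  refine ⟨i :: l, v, hv, ?_⟩
  rw [List.map_cons, List.prod_cons, ← Matrix.mulVec_mulVec, hl, hM]

/-- transfer of primitivity along integer-linear expressibility -/
lemma gcd_trans3 {a b c x y z : ℤ}
    (h : ∀ d : ℤ, d ∣ x → d ∣ y → d ∣ z → d ∣ a ∧ d ∣ b ∧ d ∣ c)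
    (hg : Int.gcd a (Int.gcd b c) = 1) : Int.gcd x (Int.gcd y z) = 1 := by
  have hdx : (Int.gcd x (Int.gcd y z) : ℤ) ∣ x := Int.gcd_dvd_left _ _
  have hdy : (Int.gcd x (Int.gcd y z) : ℤ) ∣ y :=
    dvd_trans (Int.gcd_dvd_right _ _) (Int.gcd_dvd_left _ _)
  have hdz : (Int.gcd x (Int.gcd y z) : ℤ) ∣ z :=
    dvd_trans (Int.gcd_dvd_right _ _) (Int.gcd_dvd_right _ _)
  obtain ⟨da, db, dc⟩ := h _ hdx hdy hdz
  have h1 : (Int.gcd x (Int.gcd y z) : ℤ) ∣ (Int.gcd a (Int.gcd b c) : ℤ) :=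
    Int.dvd_coe_gcd da (Int.dvd_coe_gcd db dc)
  rw [hg] at h1
  have h2 := Int.eq_one_of_dvd_one (Int.natCast_nonneg _) h1
  exact_mod_cast h2

lemma dvd_lin {d x y z : ℤ} (hx : d ∣ x) (hy : d ∣ y) (hz : d ∣ z) (k l m t : ℤ)
    (h : t = k*x + l*y + m*z) : d ∣ t := by
  subst h
  exact dvd_add (dvd_add (hx.mul_left k) (hy.mul_left l)) (hz.mul_left m)

lemma M0_mulVec (x y z : ℤ) :
    (Mmat 0).mulVec ![x,y,z] = ![7*x-6*y+6*z, 8*x-7*y+7*z, 4*x-4*y+3*z] := by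
  funext i; fin_cases i <;>
    simp [Mmat, Matrix.mulVec, dotProduct, Fin.sum_univ_three] <;> ring

lemma M1_mulVec (x y z : ℤ) :
    (Mmat 1).mulVec ![x,y,z] = ![7*x+6*y-6*z, 8*x+7*y-7*z, 4*x+3*y-4*z] := by
  funext i; fin_cases i <;>
    simp [Mmat, Matrix.mulVec, dotProduct, Fin.sum_univ_three] <;> ring

lemma M2_mulVec (x y z : ℤ) :
    (Mmat 2).mulVec ![x,y,z] = ![7*x+6*y, 8*x+7*y, 4*x+3*y+z] := by
  funext i; fin_cases i <;>
    simp [Mmat, Matrix.mulVec, dotProduct, Fin.sum_univ_three] <;> ring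

lemma M3_mulVec (x y z : ℤ) :
    (Mmat 3).mulVec ![x,y,z] = ![7*x+6*z, 8*x+7*z, 4*x+y+3*z] := by
  funext i; fin_cases i <;>
    simp [Mmat, Matrix.mulVec, dotProduct, Fin.sum_univ_three] <;> ring

lemma M4_mulVec (x y z : ℤ) :
    (Mmat 4).mulVec ![x,y,z] = ![7*x-6*z, 8*x-7*z, 4*x+y-4*z] := by
  funext i; fin_cases i <;>
    simp [Mmat, Matrix.mulVec, dotProduct, Fin.sum_univ_three] <;> ring

lemma vec3_ext {x y z a b c : ℤ} (h1 : x = a) (h2 : y = b) (h3 : z = c) :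
    (![x,y,z] : Fin 3 → ℤ) = ![a,b,c] := by subst h1; subst h2; subst h3; rfl

lemma main_desc : ∀ (n : ℕ) (a b c : ℤ), a.toNat ≤ n → 0 < a → 0 < b → 0 < c → c ≤ b →
    a ^ 2 = b ^ 2 + c ^ 2 - b * c → Int.gcd a (Int.gcd b c) = 1 →
    (a = 1 ∧ b = 1 ∧ c = 1) ∨ Reach a b c ∨ Reach a b (b - c) := by
  intro n
  induction n with
  | zero => intro a b c hn ha _ _ _ _ _; omega
  | succ n ih =>
    intro a b c hn ha hb hc hcb hQ hg
    by_cases hbceq : b = c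
    · left
      have hab : a = b := by nlinarith
      have h1 : a ∣ ((1:ℕ):ℤ) := by
        rw [← hg]
        exact Int.dvd_coe_gcd (dvd_refl a)
          (Int.dvd_coe_gcd (hab ▸ dvd_refl a) ((hbceq ▸ hab ▸ dvd_refl a)))
      have ha1 : a = 1 := Int.eq_one_of_dvd_one (le_of_lt ha) (by exact_mod_cast h1)
      exact ⟨ha1, by omega, by omega⟩
    have hcb' : c < b := lt_of_le_of_ne hcb (fun h => hbceq h.symm)
    have hab : a < b := by nlinarith [mul_pos hc (sub_pos.mpr hcb')]
    have h196 : 196*a^2 = 147*b^2 + 49*(b-2*c)^2 := by linear_combination 196*hQ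
    have hpos67 : (0:ℤ) < 6*b + 7*a := by linarith
    have ha7 : 0 < 7*a - 6*b := by
      nlinarith [h196, sq_nonneg (b-2*c), mul_pos hb hb, hpos67]
    by_cases h785 : a = 7 ∧ b = 8 ∧ c = 5
    · obtain ⟨h1,h2,h3⟩ := h785; subst h1; subst h2; subst h3
      exact Or.inr (Or.inl reach_785)
    by_cases h783 : a = 7 ∧ b = 8 ∧ c = 3
    · obtain ⟨h1,h2,h3⟩ := h783; subst h1; subst h2; subst h3
      refine Or.inr (Or.inr ?_)
      have h5 : (8:ℤ) - 3 = 5 := by norm_num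
      rw [h5]; exact reach_785
    by_cases h13157 : a = 13 ∧ b = 15 ∧ c = 7
    · obtain ⟨h1,h2,h3⟩ := h13157; subst h1; subst h2; subst h3
      exact Or.inr (Or.inl reach_13157)
    by_cases h13158 : a = 13 ∧ b = 15 ∧ c = 8
    · obtain ⟨h1,h2,h3⟩ := h13158; subst h1; subst h2; subst h3
      refine Or.inr (Or.inr ?_)
      have h5 : (15:ℤ) - 8 = 7 := by norm_num
      rw [h5]; exact reach_13157
    -- q = 0 is impossible (would force (13,15,8))
    have hq0 : 4*b - 4*a - c ≠ 0 := by
      intro h0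
      have hc4 : c = 4*b - 4*a := by linarith
      subst hc4
      have h2 : (15*a - 13*b)*(a-b) = 0 := by linear_combination -hQ
      have h3 : 15*a = 13*b := by
        rcases mul_eq_zero.mp h2 with h | h
        · linarith
        · exact absurd (by linarith : a = b) (by intro h'; exact absurd h' (ne_of_lt hab))
      have hcop : IsCoprime (13:ℤ) 15 := by
        rw [Int.isCoprime_iff_gcd_eq_one]; norm_num
      obtain ⟨k, hk⟩ := hcop.dvd_of_dvd_mul_left (⟨b, by linarith⟩ : (13:ℤ) ∣ 15*a)
      have hbk : b = 15*k := by linarith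
      have hk1 : k = 1 := by
        have hkd : k ∣ ((1:ℕ):ℤ) := by
          rw [← hg]
          exact Int.dvd_coe_gcd ⟨13, by linarith⟩
            (Int.dvd_coe_gcd ⟨15, by linarith⟩ ⟨8, by linarith⟩)
        exact Int.eq_one_of_dvd_one (by nlinarith) (by exact_mod_cast hkd)
      exact h13158 ⟨by linarith, by linarith, by linarith⟩
    -- p = 0 is impossible (would force (13,15,7))
    have hp0 : 4*a - 3*b - c ≠ 0 := by
      intro h0
      have hc4 : c = 4*a - 3*b := by linarith
      subst hc4
      have h2 : (15*a - 13*b)*(a-b) = 0 := by linear_combination -hQ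
      have h3 : 15*a = 13*b := by
        rcases mul_eq_zero.mp h2 with h | h
        · linarith
        · exact absurd (by linarith : a = b) (by intro h'; exact absurd h' (ne_of_lt hab))
      have hcop : IsCoprime (13:ℤ) 15 := by
        rw [Int.isCoprime_iff_gcd_eq_one]; norm_num
      obtain ⟨k, hk⟩ := hcop.dvd_of_dvd_mul_left (⟨b, by linarith⟩ : (13:ℤ) ∣ 15*a)
      have hbk : b = 15*k := by linarith
      have hk1 : k = 1 := by
        have hkd : k ∣ ((1:ℕ):ℤ) := by
          rw [← hg]
          exact Int.dvd_coe_gcd ⟨13, by linarith⟩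
            (Int.dvd_coe_gcd ⟨15, by linarith⟩ ⟨7, by linarith⟩)
        exact Int.eq_one_of_dvd_one (by nlinarith) (by exact_mod_cast hkd)
      exact h13157 ⟨by linarith, by linarith, by linarith⟩
    rcases lt_or_gt_of_ne hp0 with hp | hp <;> rcases lt_or_gt_of_ne hq0 with hq | hq
    · -- CASE C : p < 0, q < 0; parent maps to (a,b,b-c)
      have hy : 0 < 4*a - 4*b + c := by linarith
      have hz : 0 < 3*b + c - 4*a := by linarith
      have hQ' : (7*a-6*b)^2 = (4*a-4*b+c)^2 + (3*b+c-4*a)^2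
          - (4*a-4*b+c)*(3*b+c-4*a) := by linear_combination hQ
      have hg' : Int.gcd (7*a-6*b) (Int.gcd (4*a-4*b+c) (3*b+c-4*a)) = 1 := by
        refine gcd_trans3 ?_ hg
        intro d h1 h2 h3
        exact ⟨dvd_lin h1 h2 h3 7 (-6) 6 a (by ring),
               dvd_lin h1 h2 h3 8 (-7) 7 b (by ring),
               dvd_lin h1 h2 h3 4 (-3) 4 c (by ring)⟩
      rcases le_total (3*b+c-4*a) (4*a-4*b+c) with hord | hord
      · -- s ≤ pt : parent (a', pt, s), child via M0 to (a,b,b-c)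
        have hres := ih (7*a-6*b) (4*a-4*b+c) (3*b+c-4*a) (by omega) ha7 hy hz hord hQ' hg'
        rcases hres with ⟨e1,e2,e3⟩ | hr | hr
        · exact absurd ⟨by omega, by omega, by omega⟩ h785
        · refine Or.inr (Or.inr (reach_step 0 hr ?_))
          rw [M0_mulVec]
          exact vec3_ext (by ring) (by ring) (by ring)
        · refine Or.inr (Or.inl (reach_step 4 hr ?_))
          rw [M4_mulVec]
          exact vec3_ext (by ring) (by ring) (by ring)
      · -- pt ≤ s : parent (a', s, pt), child via M1 to (a,b,b-c)
        have hQ'' : (7*a-6*b)^2 = (3*b+c-4*a)^2 + (4*a-4*b+c)^2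
            - (3*b+c-4*a)*(4*a-4*b+c) := by linear_combination hQ
        have hg'' : Int.gcd (7*a-6*b) (Int.gcd (3*b+c-4*a) (4*a-4*b+c)) = 1 := by
          refine gcd_trans3 ?_ hg
          intro d h1 h2 h3
          exact ⟨dvd_lin h1 h2 h3 7 6 (-6) a (by ring),
                 dvd_lin h1 h2 h3 8 7 (-7) b (by ring),
                 dvd_lin h1 h2 h3 4 4 (-3) c (by ring)⟩
        have hres := ih (7*a-6*b) (3*b+c-4*a) (4*a-4*b+c) (by omega) ha7 hz hy hord hQ'' hg''
        rcases hres with ⟨e1,e2,e3⟩ | hr | hr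
        · exact absurd ⟨by omega, by omega, by omega⟩ h785
        · refine Or.inr (Or.inr (reach_step 1 hr ?_))
          rw [M1_mulVec]
          exact vec3_ext (by ring) (by ring) (by ring)
        · refine Or.inr (Or.inl (reach_step 3 hr ?_))
          rw [M3_mulVec]
          exact vec3_ext (by ring) (by ring) (by ring)
    · -- CASE B : p < 0, q > 0; parent (a', 7b-8a, 3b+c-4a) via M2
      have hr7 : 0 < 7*b - 8*a := by
        by_contra h
        push_neg at h
        linarith
      have hz : 0 < 3*b + c - 4*a := by linarith
      have hord : 3*b + c - 4*a ≤ 7*b - 8*a := by linarith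
      have hQ' : (7*a-6*b)^2 = (7*b-8*a)^2 + (3*b+c-4*a)^2
          - (7*b-8*a)*(3*b+c-4*a) := by linear_combination hQ
      have hg' : Int.gcd (7*a-6*b) (Int.gcd (7*b-8*a) (3*b+c-4*a)) = 1 := by
        refine gcd_trans3 ?_ hg
        intro d h1 h2 h3
        exact ⟨dvd_lin h1 h2 h3 7 6 0 a (by ring),
               dvd_lin h1 h2 h3 8 7 0 b (by ring),
               dvd_lin h1 h2 h3 4 3 1 c (by ring)⟩
      have hres := ih (7*a-6*b) (7*b-8*a) (3*b+c-4*a) (by omega) ha7 hr7 hz hord hQ' hg'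
      rcases hres with ⟨e1,e2,e3⟩ | hr | hr
      · exact absurd ⟨by omega, by omega, by omega⟩ h13158
      · refine Or.inr (Or.inl (reach_step 2 hr ?_))
        rw [M2_mulVec]
        exact vec3_ext (by ring) (by ring) (by ring)
      · refine Or.inr (Or.inr (reach_step 2 hr ?_))
        rw [M2_mulVec]
        exact vec3_ext (by ring) (by ring) (by ring)
    · -- p > 0, q < 0 : impossible
      exfalso
      have key : (b-a)*(b+a) = c*(b-c) := by linear_combination -hQ
      have hbc0 : 0 < b - c := by linarith
      have h2 : (4*(b-a))*(b-c) < c*(b-c) :=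
        mul_lt_mul_of_pos_right (by linarith) hbc0
      have h3 : c*(4*(b-a)) < c*(b-c) := mul_lt_mul_of_pos_left (by linarith) hc
      have h4 : (b-a)*(4*(b-c)) < (b-a)*(b+a) := by
        calc (b-a)*(4*(b-c)) = (4*(b-a))*(b-c) := by ring
        _ < c*(b-c) := h2
        _ = (b-a)*(b+a) := key.symm
      have h5 : 4*(b-c) < b+a := lt_of_mul_lt_mul_left h4 (by linarith)
      have h6 : (b-a)*(4*c) < (b-a)*(b+a) := by
        calc (b-a)*(4*c) = c*(4*(b-a)) := by ring
        _ < c*(b-c) := h3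
        _ = (b-a)*(b+a) := key.symm
      have h7 : 4*c < b+a := lt_of_mul_lt_mul_left h6 (by linarith)
      linarith
    · -- CASE A : p > 0, q > 0; parent maps to (a,b,c)
      have hy : 0 < 4*a - 3*b - c := hp
      have hz : 0 < 4*b - 4*a - c := hq
      have hQ' : (7*a-6*b)^2 = (4*a-3*b-c)^2 + (4*b-4*a-c)^2
          - (4*a-3*b-c)*(4*b-4*a-c) := by linear_combination hQ
      have hg' : Int.gcd (7*a-6*b) (Int.gcd (4*a-3*b-c) (4*b-4*a-c)) = 1 := by
        refine gcd_trans3 ?_ hg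
        intro d h1 h2 h3
        exact ⟨dvd_lin h1 h2 h3 7 (-6) 6 a (by ring),
               dvd_lin h1 h2 h3 8 (-7) 7 b (by ring),
               dvd_lin h1 h2 h3 4 (-4) 3 c (by ring)⟩
      rcases le_total (4*b-4*a-c) (4*a-3*b-c) with hord | hord
      · have hres := ih (7*a-6*b) (4*a-3*b-c) (4*b-4*a-c) (by omega) ha7 hy hz hord hQ' hg'
        rcases hres with ⟨e1,e2,e3⟩ | hr | hr
        · exact absurd ⟨by omega, by omega, by omega⟩ h783
        · refine Or.inr (Or.inl (reach_step 0 hr ?_))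
          rw [M0_mulVec]
          exact vec3_ext (by ring) (by ring) (by ring)
        · refine Or.inr (Or.inr (reach_step 4 hr ?_))
          rw [M4_mulVec]
          exact vec3_ext (by ring) (by ring) (by ring)
      · have hQ'' : (7*a-6*b)^2 = (4*b-4*a-c)^2 + (4*a-3*b-c)^2
            - (4*b-4*a-c)*(4*a-3*b-c) := by linear_combination hQ
        have hg'' : Int.gcd (7*a-6*b) (Int.gcd (4*b-4*a-c) (4*a-3*b-c)) = 1 := by
          refine gcd_trans3 ?_ hg
          intro d h1 h2 h3
          exact ⟨dvd_lin h1 h2 h3 7 6 (-6) a (by ring),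
                 dvd_lin h1 h2 h3 8 7 (-7) b (by ring),
                 dvd_lin h1 h2 h3 4 3 (-4) c (by ring)⟩
        have hres := ih (7*a-6*b) (4*b-4*a-c) (4*a-3*b-c) (by omega) ha7 hz hy hord hQ'' hg''
        rcases hres with ⟨e1,e2,e3⟩ | hr | hr
        · exact absurd ⟨by omega, by omega, by omega⟩ h783
        · refine Or.inr (Or.inl (reach_step 1 hr ?_))
          rw [M1_mulVec]
          exact vec3_ext (by ring) (by ring) (by ring)
        · refine Or.inr (Or.inr (reach_step 3 hr ?_))
          rw [M3_mulVec]
          exact vec3_ext (by ring) (by ring) (by ring)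

def Triple (w : Fin 3 → ℤ) : Prop :=
  (w 0)^2 = (w 1)^2 + (w 2)^2 - w 1 * w 2 ∧
    Int.gcd (w 0) (Int.gcd (w 1) (w 2)) = 1

lemma triple_step (i : Fin 5) (w : Fin 3 → ℤ) (h : Triple w) :
    Triple ((Mmat i).mulVec w) := by
  obtain ⟨hQ, hg⟩ := h
  have hw : w = ![w 0, w 1, w 2] := by
    funext j; fin_cases j <;> rfl
  set x := w 0; set y := w 1; set z := w 2
  fin_cases i
  · show Triple ((Mmat 0).mulVec w)
    rw [hw, M0_mulVec]
    refine ⟨by simp; linear_combination hQ, ?_⟩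
    simp only [Matrix.cons_val_zero, Matrix.cons_val_one, Matrix.head_cons,
      Matrix.cons_val_two, Matrix.tail_cons]
    refine gcd_trans3 ?_ hg
    intro d h1 h2 h3
    exact ⟨dvd_lin h1 h2 h3 7 (-6) 0 x (by ring),
           dvd_lin h1 h2 h3 4 (-3) (-1) y (by ring),
           dvd_lin h1 h2 h3 (-4) 4 (-1) z (by ring)⟩
  · show Triple ((Mmat 1).mulVec w)
    rw [hw, M1_mulVec]
    refine ⟨by simp; linear_combination hQ, ?_⟩
    simp only [Matrix.cons_val_zero, Matrix.cons_val_one, Matrix.head_cons,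
      Matrix.cons_val_two, Matrix.tail_cons]
    refine gcd_trans3 ?_ hg
    intro d h1 h2 h3
    exact ⟨dvd_lin h1 h2 h3 7 (-6) 0 x (by ring),
           dvd_lin h1 h2 h3 (-4) 4 (-1) y (by ring),
           dvd_lin h1 h2 h3 4 (-3) (-1) z (by ring)⟩
  · show Triple ((Mmat 2).mulVec w)
    rw [hw, M2_mulVec]
    refine ⟨by simp; linear_combination hQ, ?_⟩
    simp only [Matrix.cons_val_zero, Matrix.cons_val_one, Matrix.head_cons,
      Matrix.cons_val_two, Matrix.tail_cons]
    refine gcd_trans3 ?_ hg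
    intro d h1 h2 h3
    exact ⟨dvd_lin h1 h2 h3 7 (-6) 0 x (by ring),
           dvd_lin h1 h2 h3 (-8) 7 0 y (by ring),
           dvd_lin h1 h2 h3 (-4) 3 1 z (by ring)⟩
  · show Triple ((Mmat 3).mulVec w)
    rw [hw, M3_mulVec]
    refine ⟨by simp; linear_combination hQ, ?_⟩
    simp only [Matrix.cons_val_zero, Matrix.cons_val_one, Matrix.head_cons,
      Matrix.cons_val_two, Matrix.tail_cons]
    refine gcd_trans3 ?_ hg
    intro d h1 h2 h3
    exact ⟨dvd_lin h1 h2 h3 7 (-6) 0 x (by ring),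
           dvd_lin h1 h2 h3 (-4) 3 1 y (by ring),
           dvd_lin h1 h2 h3 (-8) 7 0 z (by ring)⟩
  · show Triple ((Mmat 4).mulVec w)
    rw [hw, M4_mulVec]
    refine ⟨by simp; linear_combination hQ, ?_⟩
    simp only [Matrix.cons_val_zero, Matrix.cons_val_one, Matrix.head_cons,
      Matrix.cons_val_two, Matrix.tail_cons]
    refine gcd_trans3 ?_ hg
    intro d h1 h2 h3
    exact ⟨dvd_lin h1 h2 h3 7 (-6) 0 x (by ring),
           dvd_lin h1 h2 h3 4 (-4) 1 y (by ring),
           dvd_lin h1 h2 h3 8 (-7) 0 z (by ring)⟩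

lemma triple_list (l : List (Fin 5)) (v : Fin 3 → ℤ) (h : Triple v) :
    Triple ((l.map Mmat).prod.mulVec v) := by
  induction l with
  | nil => simpa using h
  | cons i t iht =>
    rw [List.map_cons, List.prod_cons, ← Matrix.mulVec_mulVec]
    exact triple_step i _ iht

/-- 'iff' form of the main theorem: a triple of positive
integers `(a,b,c)` ordered with `b ≥ c` is a primitive Eisensteinian triplet if
and only if it is `(1,1,1)`, or some finite product of the `Mᵢ` applied to
`(7,8,5)ᵗ` or `(13,15,7)ᵗ` equals `(a,b,c)ᵗ` or `(a,b,b−c)ᵗ`. -/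
theorem eisenstein_forest_iff (a b c : ℤ) (ha : 0 < a) (hb : 0 < b) (hc : 0 < c)
    (hbc : b ≥ c) :
    (a ^ 2 = b ^ 2 + c ^ 2 - b * c ∧ Int.gcd a (Int.gcd b c) = 1) ↔
      ((a, b, c) = (1, 1, 1) ∨
        ∃ (l : List (Fin 5)) (v : Fin 3 → ℤ),
          (v = ![7, 8, 5] ∨ v = ![13, 15, 7]) ∧
          ((l.map Mmat).prod.mulVec v = ![a, b, c] ∨
            (l.map Mmat).prod.mulVec v = ![a, b, b - c])) := by
  constructor
  · rintro ⟨hQ, hg⟩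
    rcases main_desc a.toNat a b c le_rfl ha hb hc hbc hQ hg with ⟨h1, h2, h3⟩ | hr | hr
    · left; rw [h1, h2, h3]
    · right; obtain ⟨l, v, hv, he⟩ := hr; exact ⟨l, v, hv, Or.inl he⟩
    · right; obtain ⟨l, v, hv, he⟩ := hr; exact ⟨l, v, hv, Or.inr he⟩
  · rintro (h | ⟨l, v, hv, he⟩)
    · simp only [Prod.mk.injEq] at h
      obtain ⟨h1, h2, h3⟩ := h
      subst h1; subst h2; subst h3
      exact ⟨by norm_num, by decide⟩
    · have htriple : Triple ((l.map Mmat).prod.mulVec v) := by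
        apply triple_list
        rcases hv with rfl | rfl
        · exact ⟨by norm_num [Matrix.cons_val_two], by decide⟩
        · exact ⟨by norm_num [Matrix.cons_val_two], by decide⟩
      rcases he with he | he
      · rw [he] at htriple
        obtain ⟨h1, h2⟩ := htriple
        simp only [Matrix.cons_val_zero, Matrix.cons_val_one, Matrix.head_cons,
          Matrix.cons_val_two, Matrix.tail_cons] at h1 h2
        exact ⟨h1, h2⟩
      · rw [he] at htriple
        obtain ⟨h1, h2⟩ := htriple
        simp only [Matrix.cons_val_zero, Matrix.cons_val_one, Matrix.head_cons,
          Matrix.cons_val_two, Matrix.tail_cons] at h1 h2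
        refine ⟨by linear_combination h1, ?_⟩
        refine gcd_trans3 ?_ h2
        intro d h1' h2' h3'
        exact ⟨h1', h2', dvd_sub h2' h3'⟩
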